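/- Let (A_n)_{n≥1} be events in a probability space such that ∑_{n=1}^{∞} P(A_n) = ∞ and liminf_{n→∞} ( ∑_{j=1}^n ∑_{k=1}^n P(A_j ∩ A_k) ) / ( ∑_{j=1}^n P(A_j) )² = 1. Then P(A_n occurs infinitely often) = 1. -/

import Mathlib

open MeasureTheory Filter Set
open scoped ENNReal

/-- Cauchy–Schwarz for indicator sums: key inequality for Kochen–Stone. -/
lemma stmt8_cs_key {Ω : Type*} [MeasurableSpace Ω] (P : Measure Ω)
    (A : ℕ → Set Ω) (hA : ∀ n, MeasurableSet (A n)) (s : Finset ℕ) :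
    (∑ k ∈ s, P (A k)) ^ 2 ≤
      (∑ j ∈ s, ∑ k ∈ s, P (A j ∩ A k)) * P (⋃ k ∈ s, A k) := by
  set f : Ω → ℝ≥0∞ := fun ω => ∑ k ∈ s, (A k).indicator 1 ω with hf
  have hmeas : ∀ k ∈ s, Measurable fun ω => (A k).indicator (1 : Ω → ℝ≥0∞) ω :=
    fun k _ => measurable_one.indicator (hA k)
  have hfm : Measurable f := Finset.measurable_sum _ hmeas
  have h1 : ∫⁻ ω, f ω ∂P = ∑ k ∈ s, P (A k) := by
    rw [lintegral_finset_sum _ hmeas]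
    simp [lintegral_indicator (hA _)]
  have h2 : ∫⁻ ω, f ω ^ 2 ∂P = ∑ j ∈ s, ∑ k ∈ s, P (A j ∩ A k) := by
    have hpt : ∀ ω, f ω ^ 2 = ∑ j ∈ s, ∑ k ∈ s, (A j ∩ A k).indicator 1 ω := by
      intro ω
      rw [sq, hf, Finset.sum_mul_sum]
      refine Finset.sum_congr rfl fun j _ => Finset.sum_congr rfl fun k _ => ?_
      rw [Set.inter_indicator_one]
      rfl
    simp_rw [hpt]
    rw [lintegral_finset_sum]
    · refine Finset.sum_congr rfl fun j _ => ?_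
      rw [lintegral_finset_sum]
      · simp [lintegral_indicator ((hA j).inter (hA _))]
      · exact fun k _ => measurable_one.indicator ((hA j).inter (hA k))
    · exact fun j _ => Finset.measurable_sum _ fun k _ =>
        measurable_one.indicator ((hA j).inter (hA k))
  set U : Set Ω := ⋃ k ∈ s, A k with hU
  have hUm : MeasurableSet U := MeasurableSet.biUnion s.countable_toSet fun k _ => hA k
  have hfU : ∀ ω, f ω = f ω * U.indicator 1 ω := by
    intro ω
    by_cases hω : ω ∈ U
    · simp [Set.indicator_of_mem hω]
    · have : f ω = 0 := by
        rw [hf]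
        refine Finset.sum_eq_zero fun k hk => ?_
        have : ω ∉ A k := fun hmem => hω (Set.mem_biUnion hk hmem)
        simp [Set.indicator_of_notMem this]
      simp [this]
  have holder : ∫⁻ ω, f ω * U.indicator 1 ω ∂P ≤
      (∫⁻ ω, f ω ^ (2 : ℝ) ∂P) ^ (1 / 2 : ℝ) *
        (∫⁻ ω, U.indicator 1 ω ^ (2 : ℝ) ∂P) ^ (1 / 2 : ℝ) :=
    ENNReal.lintegral_mul_le_Lp_mul_Lq P Real.HolderConjugate.two_two
      hfm.aemeasurable (measurable_one.indicator hUm).aemeasurable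
  have hrw1 : ∀ ω, f ω ^ (2 : ℝ) = f ω ^ 2 := fun ω => by
    rw [← ENNReal.rpow_natCast (f ω) 2]; norm_num
  have hrw2 : ∫⁻ ω, U.indicator 1 ω ^ (2 : ℝ) ∂P = P U := by
    have hpt : ∀ ω, U.indicator (1 : Ω → ℝ≥0∞) ω ^ (2 : ℝ) = U.indicator 1 ω := by
      intro ω
      by_cases hω : ω ∈ U <;> simp [Set.indicator_of_mem, Set.indicator_of_notMem, hω,
        ENNReal.rpow_natCast]
    simp_rw [hpt]
    simp [lintegral_indicator hUm]
  have key : ∑ k ∈ s, P (A k) ≤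
      (∑ j ∈ s, ∑ k ∈ s, P (A j ∩ A k)) ^ (1 / 2 : ℝ) * (P U) ^ (1 / 2 : ℝ) := by
    calc ∑ k ∈ s, P (A k) = ∫⁻ ω, f ω ∂P := h1.symm
      _ = ∫⁻ ω, f ω * U.indicator 1 ω ∂P := by simp_rw [← hfU]
      _ ≤ (∫⁻ ω, f ω ^ (2 : ℝ) ∂P) ^ (1 / 2 : ℝ) *
          (∫⁻ ω, U.indicator 1 ω ^ (2 : ℝ) ∂P) ^ (1 / 2 : ℝ) := holder
      _ = (∑ j ∈ s, ∑ k ∈ s, P (A j ∩ A k)) ^ (1 / 2 : ℝ) * (P U) ^ (1 / 2 : ℝ) := by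
          simp_rw [hrw1, hrw2, h2]
  calc (∑ k ∈ s, P (A k)) ^ 2
      ≤ ((∑ j ∈ s, ∑ k ∈ s, P (A j ∩ A k)) ^ (1 / 2 : ℝ) * (P U) ^ (1 / 2 : ℝ)) ^ 2 :=
        pow_le_pow_left' key 2
    _ = (∑ j ∈ s, ∑ k ∈ s, P (A j ∩ A k)) * P U := by
        rw [mul_pow, ← ENNReal.rpow_natCast (_ ^ (1/2:ℝ)) 2,
          ← ENNReal.rpow_natCast ((P U) ^ (1/2:ℝ)) 2,
          ← ENNReal.rpow_mul, ← ENNReal.rpow_mul]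
        norm_num

theorem stmt8 {Ω : Type*} [MeasurableSpace Ω] (P : Measure Ω) [IsProbabilityMeasure P]
    (A : ℕ → Set Ω) (hA : ∀ n, MeasurableSet (A n))
    (hdiv : (∑' n, P (A n)) = ⊤)
    (hliminf : Filter.atTop.liminf (fun n =>
      (∑ j ∈ Finset.Icc 1 n, ∑ k ∈ Finset.Icc 1 n, (P (A j ∩ A k)).toReal) /
        (∑ j ∈ Finset.Icc 1 n, (P (A j)).toReal) ^ 2) = 1) :
    P (Filter.limsup A Filter.atTop) = 1 := by
  classical
  set Sr : ℕ → ℝ := fun n => ∑ j ∈ Finset.Icc 1 n, (P (A j)).toReal with hSr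
  set Dr : ℕ → ℝ := fun n =>
    ∑ j ∈ Finset.Icc 1 n, ∑ k ∈ Finset.Icc 1 n, (P (A j ∩ A k)).toReal with hDr
  -- Sr is monotone and tends to infinity
  have hSmono : Monotone Sr := fun a b hab =>
    Finset.sum_le_sum_of_subset_of_nonneg (Finset.Icc_subset_Icc le_rfl hab)
      (fun _ _ _ => ENNReal.toReal_nonneg)
  have hStop : Tendsto Sr atTop atTop := by
    apply tendsto_atTop_atTop_of_monotone hSmono
    intro M
    have hlt : ENNReal.ofReal (max M 0) + P (A 0) < ∑' n, P (A n) := by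
      rw [hdiv]
      exact ENNReal.add_lt_top.mpr ⟨ENNReal.ofReal_lt_top, (measure_lt_top _ _)⟩
    rw [ENNReal.tsum_eq_iSup_sum] at hlt
    obtain ⟨s, hs⟩ := lt_iSup_iff.mp hlt
    obtain ⟨n, hn⟩ := s.exists_nat_subset_range
    have hsub : s ⊆ insert 0 (Finset.Icc 1 n) := by
      intro x hx
      rcases Nat.eq_zero_or_pos x with h | h
      · simp [h]
      · exact Finset.mem_insert_of_mem (Finset.mem_Icc.mpr
          ⟨h, (Finset.mem_range.mp (hn hx)).le⟩)
    have hle : ∑ i ∈ s, P (A i) ≤ P (A 0) + ∑ i ∈ Finset.Icc 1 n, P (A i) := by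
      refine le_trans (Finset.sum_le_sum_of_subset_of_nonneg hsub fun _ _ _ => zero_le) ?_
      rw [Finset.sum_insert (by simp)]
    have h2 : ENNReal.ofReal (max M 0) + P (A 0) < P (A 0) + ∑ i ∈ Finset.Icc 1 n, P (A i) :=
      lt_of_lt_of_le hs hle
    rw [add_comm (ENNReal.ofReal (max M 0))] at h2
    have h3 : ENNReal.ofReal (max M 0) < ∑ i ∈ Finset.Icc 1 n, P (A i) :=
      lt_of_add_lt_add_left (a := P (A 0)) h2
    have hfin : ∑ i ∈ Finset.Icc 1 n, P (A i) ≠ ⊤ :=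
      (ENNReal.sum_lt_top.mpr fun i _ => measure_lt_top _ _).ne
    refine ⟨n, ?_⟩
    have h4 := ENNReal.toReal_mono hfin h3.le
    rw [ENNReal.toReal_ofReal (le_max_right M 0)] at h4
    have h5 : Sr n = (∑ i ∈ Finset.Icc 1 n, P (A i)).toReal := by
      simp only [hSr]
      rw [ENNReal.toReal_sum (fun i _ => measure_ne_top _ _)]
    rw [h5]
    exact le_trans (le_max_left M 0) h4
  -- frequently the ratio is below 1 + δ
  have hfreq : ∀ δ : ℝ, 0 < δ → ∃ᶠ n in atTop, Dr n / (Sr n) ^ 2 < 1 + δ := by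
    intro δ hδ
    by_contra hcon
    rw [Filter.not_frequently] at hcon
    have hev : ∀ᶠ n in atTop, 1 + δ ≤ Dr n / (Sr n) ^ 2 := by
      filter_upwards [hcon] with n hn
      exact not_lt.mp hn
    have hset : (1 + δ) ∈ {a : ℝ | ∀ᶠ n in atTop, a ≤ Dr n / (Sr n) ^ 2} := hev
    rw [Filter.liminf_eq] at hliminf
    by_cases hbdd : BddAbove {a : ℝ | ∀ᶠ n in atTop, a ≤ Dr n / (Sr n) ^ 2}
    · have := le_csSup hbdd hset
      rw [hliminf] at this
      linarith
    · rw [Real.sSup_of_not_bddAbove hbdd] at hliminf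
      linarith
  -- key claim: each tail union has measure 1
  have htail : ∀ m : ℕ, 1 ≤ m → P (⋃ i, ⋃ (_ : m ≤ i), A i) = 1 := by
    intro m hm
    set T : Set Ω := ⋃ i, ⋃ (_ : m ≤ i), A i with hT
    have hTm : MeasurableSet T := MeasurableSet.iUnion fun i => MeasurableSet.iUnion fun _ => hA i
    have hTfin : P T ≠ ⊤ := measure_ne_top _ _
    have hge : ∀ ε : ℝ, 0 < ε → 1 - ε ≤ (P T).toReal := by
      intro ε hε
      rcases le_or_gt 1 ε with hε1 | hε1
      · have : (0:ℝ) ≤ (P T).toReal := ENNReal.toReal_nonneg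
        linarith
      -- ε < 1 case
      set C : ℝ := Sr (m - 1) with hC
      have hC0 : 0 ≤ C := Finset.sum_nonneg fun _ _ => ENNReal.toReal_nonneg
      -- choose n with both properties
      have hev : ∀ᶠ n in atTop, 4 * (C + 1) / ε ≤ Sr n ∧ m ≤ n := by
        filter_upwards [hStop.eventually_ge_atTop (4 * (C + 1) / ε),
          eventually_ge_atTop m] with n h1 h2
        exact ⟨h1, h2⟩
      obtain ⟨n, hn1, ⟨hnS, hnm⟩⟩ := ((hfreq (ε/2) (by linarith)).and_eventually hev).exists
      set S := Sr n with hSdef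
      set D := Dr n with hDdef
      have hεS : 4 * (C + 1) ≤ ε * S := by
        rw [div_le_iff₀ hε] at hnS
        linarith [hnS]
      have hS0 : 0 < S := by nlinarith
      have hD : D < (1 + ε/2) * S^2 := by
        rw [div_lt_iff₀ (by positivity)] at hn1
        linarith [hn1]
      -- split the sum
      have hun : Finset.Icc 1 n = Finset.Icc 1 (m-1) ∪ Finset.Icc m n := by
        ext x
        simp only [Finset.mem_Icc, Finset.mem_union]
        omega
      have hdis : Disjoint (Finset.Icc 1 (m-1)) (Finset.Icc m n) := by
        rw [Finset.disjoint_left]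
        intro a ha hb
        rw [Finset.mem_Icc] at ha hb
        omega
      have hsplit : ∑ j ∈ Finset.Icc m n, (P (A j)).toReal = S - C := by
        rw [hSdef, hC]
        simp only [hSr]
        rw [hun, Finset.sum_union hdis]
        ring
      -- Cauchy-Schwarz
      set U : Set Ω := ⋃ k ∈ Finset.Icc m n, A k with hUdef
      have hUT : U ⊆ T := by
        intro x hx
        rw [hUdef, Set.mem_iUnion₂] at hx
        obtain ⟨k, hk, hxk⟩ := hx
        exact Set.mem_iUnion₂.mpr ⟨k, (Finset.mem_Icc.mp hk).1, hxk⟩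
      have hcs := stmt8_cs_key P A hA (Finset.Icc m n)
      -- convert to reals
      have hDfin' : (∑ j ∈ Finset.Icc m n, ∑ k ∈ Finset.Icc m n, P (A j ∩ A k)) ≠ ⊤ :=
        (ENNReal.sum_lt_top.mpr fun j _ =>
          ENNReal.sum_lt_top.mpr fun k _ => measure_lt_top _ _).ne
      have hRHSfin : (∑ j ∈ Finset.Icc m n, ∑ k ∈ Finset.Icc m n, P (A j ∩ A k)) * P U ≠ ⊤ :=
        ENNReal.mul_ne_top hDfin' (measure_ne_top _ _)
      have hcsr := ENNReal.toReal_mono hRHSfin hcs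
      rw [ENNReal.toReal_mul, ENNReal.toReal_pow,
        ENNReal.toReal_sum (fun k _ => measure_ne_top _ _)] at hcsr
      have hDsumr : (∑ j ∈ Finset.Icc m n, ∑ k ∈ Finset.Icc m n, P (A j ∩ A k)).toReal
          = ∑ j ∈ Finset.Icc m n, ∑ k ∈ Finset.Icc m n, (P (A j ∩ A k)).toReal := by
        rw [ENNReal.toReal_sum (fun j _ =>
          (ENNReal.sum_lt_top.mpr fun k _ => measure_lt_top _ _).ne)]
        exact Finset.sum_congr rfl fun j _ =>
          ENNReal.toReal_sum (fun k _ => measure_ne_top _ _)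
      rw [hDsumr, hsplit] at hcsr
      set u : ℝ := (P U).toReal with hu
      set D' : ℝ := ∑ j ∈ Finset.Icc m n, ∑ k ∈ Finset.Icc m n, (P (A j ∩ A k)).toReal with hD'
      -- D' ≤ D
      have hD'D : D' ≤ D := by
        rw [hD', hDdef]
        simp only [hDr]
        calc ∑ j ∈ Finset.Icc m n, ∑ k ∈ Finset.Icc m n, (P (A j ∩ A k)).toReal
            ≤ ∑ j ∈ Finset.Icc m n, ∑ k ∈ Finset.Icc 1 n, (P (A j ∩ A k)).toReal :=
              Finset.sum_le_sum fun j _ => Finset.sum_le_sum_of_subset_of_nonneg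
                (Finset.Icc_subset_Icc hm le_rfl) fun _ _ _ => ENNReal.toReal_nonneg
          _ ≤ ∑ j ∈ Finset.Icc 1 n, ∑ k ∈ Finset.Icc 1 n, (P (A j ∩ A k)).toReal :=
              Finset.sum_le_sum_of_subset_of_nonneg (Finset.Icc_subset_Icc hm le_rfl)
                fun _ _ _ => Finset.sum_nonneg fun _ _ => ENNReal.toReal_nonneg
      have hu0 : 0 ≤ u := ENNReal.toReal_nonneg
      have hu1 : u ≤ 1 := by
        rw [hu]
        exact ENNReal.toReal_le_of_le_ofReal one_pos.le
          (by simpa using prob_le_one (μ := P) (s := U))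
      -- real arithmetic
      have hCεS : 4 * C ≤ ε * S := by linarith
      have hT2 : (1 - ε/2) * S^2 ≤ (S - C)^2 := by
        nlinarith [mul_le_mul_of_nonneg_right hCεS hS0.le, sq_nonneg C]
      have hDu : (1 - ε/2) * S^2 ≤ D * u := by
        calc (1 - ε/2) * S^2 ≤ (S - C)^2 := hT2
          _ ≤ D' * u := hcsr
          _ ≤ D * u := mul_le_mul_of_nonneg_right hD'D hu0
      have hfinal : 1 - ε ≤ u := by
        nlinarith [mul_le_mul_of_nonneg_right hD.le hu0, mul_pos hS0 hS0,
          mul_nonneg hε.le (mul_pos hS0 hS0).le, hu1, hε1]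
      have : u ≤ (P T).toReal := ENNReal.toReal_mono hTfin (measure_mono hUT)
      linarith
    -- from ∀ ε, deduce measure 1
    have h1le : (1:ℝ) ≤ (P T).toReal := by
      by_contra hcon
      push_neg at hcon
      have := hge ((1 - (P T).toReal) / 2) (by linarith)
      linarith
    have hle1 : (P T).toReal ≤ 1 :=
      ENNReal.toReal_le_of_le_ofReal one_pos.le
        (by simpa using prob_le_one (μ := P) (s := T))
    have : (P T).toReal = 1 := le_antisymm hle1 h1le
    exact (ENNReal.toReal_eq_one_iff _).mp this
  -- conclude for limsup
  have hlimsup : Filter.limsup A Filter.atTop = ⋂ n, ⋃ i, ⋃ (_ : n ≤ i), A i := by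
    rw [limsup_eq_iInf_iSup_of_nat]
    simp only [iInf_eq_iInter, iSup_eq_iUnion]
  rw [hlimsup]
  have hmeas : ∀ n : ℕ, MeasurableSet (⋃ i, ⋃ (_ : n ≤ i), A i) :=
    fun n => MeasurableSet.iUnion fun i => MeasurableSet.iUnion fun _ => hA i
  rw [← prob_compl_eq_zero_iff (MeasurableSet.iInter hmeas)]
  rw [Set.compl_iInter]
  refine measure_iUnion_null fun n => ?_
  rw [prob_compl_eq_zero_iff (hmeas n)]
  rcases Nat.eq_zero_or_pos n with h | h
  · subst h
    refine le_antisymm prob_le_one ?_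
    calc (1:ℝ≥0∞) = P (⋃ i, ⋃ (_ : 1 ≤ i), A i) := (htail 1 le_rfl).symm
      _ ≤ P (⋃ i, ⋃ (_ : 0 ≤ i), A i) := measure_mono (by
          intro x hx
          rw [Set.mem_iUnion₂] at hx ⊢
          obtain ⟨i, hi, hxi⟩ := hx
          exact ⟨i, Nat.zero_le i, hxi⟩)
  · exact htail n h
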